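/- For all positive integers T and N (with N, T > N_ℓ), the instance in which all remaining agents have exactly T active days is a worst case for the symmetric threshold-T policy against the overall optimum: C(T, N) · OVOPT(T) ≤ C(T, T) · OVOPT(N), i.e., C(T, N)/OVOPT(N) ≤ C(T, T)/OVOPT(T). -/

import Mathlib

/-- Total cost of the symmetric threshold-`T` policy at the state with `ℓ` inactive
agents of total paid cost `D`, on the instance where every remaining agent has `n`
active days. -/
def thrCost (M B G ℓ D T n : ℕ) : ℕ :=
  if n < T then D + (M - ℓ) * n else D + (M - ℓ) * (T - 1) + min G ((M - ℓ) * B)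

/-- Overall offline optimum at that state on instance `n`. -/
def ovOpt (M B G ℓ D n : ℕ) : ℕ := min (D + (M - ℓ) * min n B) G

/-- The instance in which all remaining agents have exactly `T` active days is a worst
case for the symmetric threshold-`T` policy against the overall optimum. -/
theorem stmt16 (M B G ℓ : ℕ) (hM : 2 ≤ M) (hB : 1 ≤ B)
    (hBG : B < G) (hGMB : G < M * B) (hℓ : ℓ ≤ M - 1)
    (N : ℕ → ℕ) (hN0 : N 0 = 0)
    (hNpos : ∀ n, 1 ≤ n → n ≤ ℓ → 0 < N n)
    (hNmono : ∀ i j, 1 ≤ i → i ≤ j → j ≤ ℓ → N i ≤ N j)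
    (D : ℕ) (hD : D = ∑ n ∈ Finset.Icc 1 ℓ, N n) :
    ∀ T n : ℕ, N ℓ < T → N ℓ < n →
      thrCost M B G ℓ D T n * ovOpt M B G ℓ D T ≤
        thrCost M B G ℓ D T T * ovOpt M B G ℓ D n := by
  intro T n hT hn
  set k := M - ℓ with hk
  unfold thrCost ovOpt
  by_cases h : n < T
  · simp only [if_pos h, if_neg (lt_irrefl T)]
    set C := D + k * (T - 1) + min G (k * B) with hC
    have hnT1 : n ≤ T - 1 := Nat.le_sub_one_of_lt h
    have hAC : D + k * n ≤ C := by
      have : k * n ≤ k * (T - 1) := Nat.mul_le_mul_left _ hnT1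
      omega
    by_cases hnB : B ≤ n
    · have h1 : min n B = B := min_eq_right hnB
      have h2 : min T B = B := min_eq_right (le_of_lt (lt_of_le_of_lt hnB h))
      rw [h1, h2]
      exact Nat.mul_le_mul_right _ hAC
    · push_neg at hnB
      have h1 : min n B = n := min_eq_left (le_of_lt hnB)
      rw [h1]
      have hYC : min (D + k * min T B) G ≤ C := by
        rcases le_total G (k * B) with hg | hg
        · have hmg : min G (k * B) = G := min_eq_left hg
          calc min (D + k * min T B) G ≤ G := min_le_right _ _
            _ ≤ C := by omega
        · have hmg : min G (k * B) = k * B := min_eq_right hg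
          have hkm : k * min T B ≤ k * B := Nat.mul_le_mul_left _ (min_le_right _ _)
          calc min (D + k * min T B) G ≤ D + k * min T B := min_le_left _ _
            _ ≤ C := by omega
      rcases le_total (D + k * n) G with hA | hA
      · rw [min_eq_left hA]
        calc (D + k * n) * min (D + k * min T B) G
            ≤ (D + k * n) * C := Nat.mul_le_mul_left _ hYC
          _ = C * (D + k * n) := mul_comm _ _
      · rw [min_eq_right hA]
        exact Nat.mul_le_mul hAC (min_le_right _ _)
  · push_neg at h
    simp only [if_neg (lt_irrefl T), if_neg (not_lt.2 h)]
    apply Nat.mul_le_mul_left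
    exact min_le_min (Nat.add_le_add_left
      (Nat.mul_le_mul_left _ (min_le_min h le_rfl)) _) le_rfl
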